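/- Let A ∈ ℝ^{n×n} be symmetric and let Q, δQ ∈ ℝ^{n×n} be such that Q + δQ is orthogonal. Then for every k with 1 ≤ k ≤ n, |λ_k(A) − λ_k(Qᵀ A Q)| ≤ (2‖Q‖ + ‖δQ‖) ‖δQ‖ ‖A‖. -/

import Mathlib

open Matrix

noncomputable def specNorm {m n : ℕ} (A : Matrix (Fin m) (Fin n) ℝ) : ℝ :=
  ‖LinearMap.toContinuousLinearMap (Matrix.toEuclideanLin A)‖

noncomputable def frobNorm {m n : ℕ} (A : Matrix (Fin m) (Fin n) ℝ) : ℝ :=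
  Real.sqrt (∑ p, ∑ q, (A p q) ^ 2)

def offDiag {n : ℕ} (A : Matrix (Fin n) (Fin n) ℝ) : Matrix (Fin n) (Fin n) ℝ :=
  fun p q => if p = q then 0 else A p q

def jacobiRot {n : ℕ} (i j : Fin n) (c s : ℝ) : Matrix (Fin n) (Fin n) ℝ :=
  fun p q =>
    if p = i ∧ q = i then c
    else if p = j ∧ q = j then c
    else if p = i ∧ q = j then s
    else if p = j ∧ q = i then -s
    else if p = q then 1 else 0

open Classical in
noncomputable def eigValsDesc {n : ℕ} (A : Matrix (Fin n) (Fin n) ℝ) : Fin n → ℝ :=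
  if hA : A.IsHermitian then
    fun k => (hA.eigenvalues ∘ Tuple.sort hA.eigenvalues) k.rev
  else 0

noncomputable def singValsDesc {m n : ℕ} (A : Matrix (Fin m) (Fin n) ℝ) : Fin n → ℝ :=
  fun k => Real.sqrt (eigValsDesc (Aᵀ * A) k)

open Matrix Module Submodule
open scoped InnerProductSpace

set_option maxHeartbeats 1600000

section Aux
variable {n : ℕ}

local notation "E" => EuclideanSpace ℝ (Fin n)
local notation "f" => Matrix.toEuclideanLin

lemma inner_transpose (M : Matrix (Fin n) (Fin n) ℝ) (x y : E) :
    ⟪f Mᵀ x, y⟫_ℝ = ⟪x, f M y⟫_ℝ := by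
  simp only [PiLp.inner_apply, RCLike.inner_apply, starRingEnd_apply, star_trivial,
    toEuclideanLin_apply, PiLp.toLp_apply, mulVec, dotProduct]
  simp only [Finset.sum_mul, Finset.mul_sum, transpose_apply]
  rw [Finset.sum_comm]
  apply Finset.sum_congr rfl; intro i _
  apply Finset.sum_congr rfl; intro j _
  ring

lemma norm_apply_le (M : Matrix (Fin n) (Fin n) ℝ) (x : E) :
    ‖f M x‖ ≤ specNorm M * ‖x‖ := by
  have h := (LinearMap.toContinuousLinearMap (f M)).le_opNorm x
  rw [LinearMap.coe_toContinuousLinearMap'] at h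
  exact h

lemma toEuclideanLin_eigBasis {A : Matrix (Fin n) (Fin n) ℝ} (hA : A.IsHermitian) (j : Fin n) :
    f A (hA.eigenvectorBasis j) = hA.eigenvalues j • hA.eigenvectorBasis j := by
  have h := congrFun (hA.mulVec_eigenvectorBasis j)
  ext i
  simp only [toEuclideanLin_apply, PiLp.toLp_apply,
    PiLp.smul_apply, smul_eq_mul]
  simpa using h i

lemma qf_span_core {A : Matrix (Fin n) (Fin n) ℝ} (hA : A.IsHermitian) (S : Finset (Fin n))
    (x : E) (hx : x ∈ span ℝ (hA.eigenvectorBasis '' ↑S)) :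
    ∃ r : ↥S → ℝ, ⟪f A x, x⟫_ℝ = ∑ i : ↥S, hA.eigenvalues i.1 * r i ^ 2 ∧
      ‖x‖ ^ 2 = ∑ i : ↥S, r i ^ 2 := by
  set v := hA.eigenvectorBasis with hv
  have horto : ∀ a b : Fin n, ⟪(v a : E), v b⟫_ℝ = if a = b then 1 else 0 :=
    orthonormal_iff_ite.mp v.orthonormal
  have himg : (⇑v '' ↑S) = Set.range (fun i : ↥S => v i.1) := Set.image_eq_range _ _
  rw [himg] at hx
  obtain ⟨r, hr⟩ := mem_span_range_iff_exists_fun ℝ |>.mp hx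
  refine ⟨r, ?_, ?_⟩
  · have hAx : f A x = ∑ i : ↥S, (hA.eigenvalues i.1 * r i) • v i.1 := by
      rw [← hr, map_sum]
      refine Finset.sum_congr rfl fun i _ => ?_
      rw [LinearMap.map_smul, toEuclideanLin_eigBasis hA, smul_smul, mul_comm]
    rw [hAx, ← hr, sum_inner]
    refine Finset.sum_congr rfl fun i _ => ?_
    rw [inner_sum]
    simp only [real_inner_smul_left, real_inner_smul_right, horto, Subtype.coe_inj,
      mul_ite, mul_one, mul_zero, Finset.sum_ite_eq, Finset.mem_univ, if_true]
    ring
  · rw [← real_inner_self_eq_norm_sq, ← hr, sum_inner]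
    refine Finset.sum_congr rfl fun i _ => ?_
    rw [inner_sum]
    simp only [real_inner_smul_left, real_inner_smul_right, horto, Subtype.coe_inj,
      mul_ite, mul_one, mul_zero, Finset.sum_ite_eq, Finset.mem_univ, if_true]
    ring

lemma finrank_span_basis_image {A : Matrix (Fin n) (Fin n) ℝ} (hA : A.IsHermitian)
    (S : Finset (Fin n)) :
    finrank ℝ (span ℝ (hA.eigenvectorBasis '' ↑S)) = S.card := by
  rw [Set.image_eq_range]
  have li : LinearIndependent ℝ (fun i : ↥(S : Set (Fin n)) => hA.eigenvectorBasis i.1) :=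
    (hA.eigenvectorBasis.orthonormal.comp _ Subtype.val_injective).linearIndependent
  rw [finrank_span_eq_card li]
  simp

lemma eigValsDesc_eq {A : Matrix (Fin n) (Fin n) ℝ} (hA : A.IsHermitian) (k : Fin n) :
    eigValsDesc A k = hA.eigenvalues (Tuple.sort hA.eigenvalues k.rev) := by
  rw [eigValsDesc, dif_pos hA]
  rfl

lemma exists_top {A : Matrix (Fin n) (Fin n) ℝ} (hA : A.IsHermitian) (k : Fin n) :
    ∃ V : Submodule ℝ E, finrank ℝ V = k + 1 ∧
      ∀ x ∈ V, eigValsDesc A k * ‖x‖ ^ 2 ≤ ⟪f A x, x⟫_ℝ := by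
  classical
  set σ := Tuple.sort hA.eigenvalues with hσ
  set S := Finset.image σ (Finset.Ici k.rev) with hS
  refine ⟨span ℝ (hA.eigenvectorBasis '' ↑S), ?_, ?_⟩
  · rw [finrank_span_basis_image, hS, Finset.card_image_of_injective _ σ.injective,
      Fin.card_Ici, Fin.val_rev]
    have := k.isLt; omega
  · intro x hx
    obtain ⟨r, h1, h2⟩ := qf_span_core hA S x hx
    rw [h1, h2, Finset.mul_sum]
    apply Finset.sum_le_sum
    intro i _
    have hi : ↑i ∈ S := i.2
    obtain ⟨j, hj, hji⟩ := Finset.mem_image.mp hi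
    have hle : eigValsDesc A k ≤ hA.eigenvalues i.1 := by
      rw [eigValsDesc_eq hA, ← hji]
      exact Tuple.monotone_sort hA.eigenvalues (Finset.mem_Ici.mp hj)
    exact mul_le_mul_of_nonneg_right hle (sq_nonneg _)

lemma exists_bot {A : Matrix (Fin n) (Fin n) ℝ} (hA : A.IsHermitian) (k : Fin n) :
    ∃ W : Submodule ℝ E, finrank ℝ W = n - k ∧
      ∀ x ∈ W, ⟪f A x, x⟫_ℝ ≤ eigValsDesc A k * ‖x‖ ^ 2 := by
  classical
  set σ := Tuple.sort hA.eigenvalues with hσ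
  set S := Finset.image σ (Finset.Iic k.rev) with hS
  refine ⟨span ℝ (hA.eigenvectorBasis '' ↑S), ?_, ?_⟩
  · rw [finrank_span_basis_image, hS, Finset.card_image_of_injective _ σ.injective,
      Fin.card_Iic, Fin.val_rev]
    have := k.isLt; omega
  · intro x hx
    obtain ⟨r, h1, h2⟩ := qf_span_core hA S x hx
    rw [h1, h2, Finset.mul_sum]
    apply Finset.sum_le_sum
    intro i _
    have hi : ↑i ∈ S := i.2
    obtain ⟨j, hj, hji⟩ := Finset.mem_image.mp hi
    have hle : hA.eigenvalues i.1 ≤ eigValsDesc A k := by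
      rw [eigValsDesc_eq hA, ← hji]
      exact Tuple.monotone_sort hA.eigenvalues (Finset.mem_Iic.mp hj)
    exact mul_le_mul_of_nonneg_right hle (sq_nonneg _)

lemma exists_mem_inf (V W : Submodule ℝ (EuclideanSpace ℝ (Fin n)))
    (h : n < finrank ℝ V + finrank ℝ W) :
    ∃ x : E, x ∈ V ∧ x ∈ W ∧ x ≠ 0 := by
  have h1 := Submodule.finrank_sup_add_finrank_inf_eq V W
  have h2 : finrank ℝ ↥(V ⊔ W) ≤ n := by
    have h3 := Submodule.finrank_le (V ⊔ W)
    rwa [finrank_euclideanSpace, Fintype.card_fin] at h3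
  have h3 : 0 < finrank ℝ ↥(V ⊓ W) := by omega
  rw [Module.finrank_pos_iff] at h3
  obtain ⟨x, hx⟩ := exists_ne (0 : ↥(V ⊓ W))
  exact ⟨x.1, x.2.1, x.2.2, fun hc => hx (Subtype.ext hc)⟩

lemma eig_ge {A : Matrix (Fin n) (Fin n) ℝ} (hA : A.IsHermitian) (k : Fin n) (c : ℝ)
    (V : Submodule ℝ (EuclideanSpace ℝ (Fin n))) (hV : finrank ℝ V = k + 1)
    (h : ∀ x ∈ V, c * ‖x‖ ^ 2 ≤ ⟪f A x, x⟫_ℝ) :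
    c ≤ eigValsDesc A k := by
  obtain ⟨W, hW, hWf⟩ := exists_bot hA k
  obtain ⟨x, hxV, hxW, hx0⟩ := exists_mem_inf V W (by rw [hV, hW]; have := k.isLt; omega)
  have h1 := h x hxV
  have h2 := hWf x hxW
  have hn : (0:ℝ) < ‖x‖ ^ 2 := by
    have := norm_pos_iff.mpr hx0
    positivity
  nlinarith

lemma eig_le {A : Matrix (Fin n) (Fin n) ℝ} (hA : A.IsHermitian) (k : Fin n) (c : ℝ)
    (W : Submodule ℝ (EuclideanSpace ℝ (Fin n))) (hW : finrank ℝ W = n - k)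
    (h : ∀ x ∈ W, ⟪f A x, x⟫_ℝ ≤ c * ‖x‖ ^ 2) :
    eigValsDesc A k ≤ c := by
  obtain ⟨V, hV, hVf⟩ := exists_top hA k
  obtain ⟨x, hxV, hxW, hx0⟩ := exists_mem_inf V W (by rw [hV, hW]; have := k.isLt; omega)
  have h1 := h x hxW
  have h2 := hVf x hxV
  have hn : (0:ℝ) < ‖x‖ ^ 2 := by
    have := norm_pos_iff.mpr hx0
    positivity
  nlinarith

lemma specNorm_nonneg {m k : ℕ} (M : Matrix (Fin m) (Fin k) ℝ) : 0 ≤ specNorm M := by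
  unfold specNorm; exact norm_nonneg _


/-- Eigenvalue perturbation under a nearly orthogonal congruence. -/
theorem eigenvalue_perturbation_near_orthogonal {n : ℕ}
    (A Q δQ : Matrix (Fin n) (Fin n) ℝ) (hA : Aᵀ = A)
    (horth : (Q + δQ)ᵀ * (Q + δQ) = 1) :
    ∀ k : Fin n,
      |eigValsDesc A k - eigValsDesc (Qᵀ * A * Q) k| ≤
        (2 * specNorm Q + specNorm δQ) * specNorm δQ * specNorm A := by
  intro k
  have hAh : A.IsHermitian := by
    rw [Matrix.IsHermitian, conjTranspose_eq_transpose_of_trivial, hA]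
  set B := Qᵀ * A * Q with hBdef
  have hBh : B.IsHermitian := by
    rw [Matrix.IsHermitian, conjTranspose_eq_transpose_of_trivial, hBdef]
    simp [transpose_mul, hA, Matrix.mul_assoc]
  set P := Q + δQ with hP
  set ε := (2 * specNorm Q + specNorm δQ) * specNorm δQ * specNorm A with hε
  have hmul : ∀ (M N : Matrix (Fin n) (Fin n) ℝ) (x : EuclideanSpace ℝ (Fin n)),
      f (M * N) x = f M (f N x) := by
    intro M N x; ext i
    simp [toEuclideanLin_apply, PiLp.toLp_apply,
      ← mulVec_mulVec]
  have hone : ∀ x : EuclideanSpace ℝ (Fin n), f (1 : Matrix (Fin n) (Fin n) ℝ) x = x := by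
    intro x; ext i
    simp [toEuclideanLin_apply, PiLp.toLp_apply]
  have hiso2 : ∀ x : EuclideanSpace ℝ (Fin n), ‖f P x‖ ^ 2 = ‖x‖ ^ 2 := by
    intro x
    have h1 : f Pᵀ (f P x) = x := by rw [← hmul, horth, hone]
    have h2 : ⟪f P x, f P x⟫_ℝ = ⟪x, x⟫_ℝ := by
      rw [← inner_transpose P (f P x) x, h1]
    rw [← real_inner_self_eq_norm_sq, ← real_inner_self_eq_norm_sq, h2]
  have hinj : Function.Injective (f P) := by
    rw [← LinearMap.ker_eq_bot]
    rw [LinearMap.ker_eq_bot']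
    intro x hx
    have h := hiso2 x
    rw [hx] at h
    simp only [norm_zero] at h
    have : ‖x‖ = 0 := by nlinarith [norm_nonneg x]
    exact norm_eq_zero.mp this
  have hsurj : Function.Surjective (f P) := LinearMap.injective_iff_surjective.mp hinj
  set e : EuclideanSpace ℝ (Fin n) ≃ₗ[ℝ] EuclideanSpace ℝ (Fin n) :=
    LinearEquiv.ofBijective (f P) ⟨hinj, hsurj⟩ with he
  have heapp : ∀ x, e x = f P x := fun x => rfl
  have hA0 : 0 ≤ specNorm A := specNorm_nonneg A
  have hQ0 : 0 ≤ specNorm Q := specNorm_nonneg Q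
  have hδ0 : 0 ≤ specNorm δQ := specNorm_nonneg δQ
  have hqf : ∀ x : EuclideanSpace ℝ (Fin n),
      |⟪f A (f P x), f P x⟫_ℝ - ⟪f B x, x⟫_ℝ| ≤ ε * ‖x‖ ^ 2 := by
    intro x
    set u := f Q x with hu'
    set v := f δQ x with hv'
    have hPx : f P x = u + v := by
      rw [hP, map_add]; rfl
    have hBx : ⟪f B x, x⟫_ℝ = ⟪f A u, u⟫_ℝ := by
      rw [hBdef, hmul, hmul, inner_transpose, real_inner_comm]
    rw [hPx, hBx]
    have hfadd : f A (u + v) = f A u + f A v := map_add _ _ _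
    have expand : ⟪f A (u + v), u + v⟫_ℝ - ⟪f A u, u⟫_ℝ =
        ⟪f A u, v⟫_ℝ + ⟪f A v, u⟫_ℝ + ⟪f A v, v⟫_ℝ := by
      rw [hfadd, inner_add_left, inner_add_right, inner_add_right]
      ring
    rw [expand]
    have hu : ‖u‖ ≤ specNorm Q * ‖x‖ := norm_apply_le Q x
    have hv : ‖v‖ ≤ specNorm δQ * ‖x‖ := norm_apply_le δQ x
    have c1 : |⟪f A u, v⟫_ℝ| ≤ specNorm A * (specNorm Q * ‖x‖) * (specNorm δQ * ‖x‖) := by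
      calc |⟪f A u, v⟫_ℝ| ≤ ‖f A u‖ * ‖v‖ := abs_real_inner_le_norm _ _
        _ ≤ (specNorm A * ‖u‖) * ‖v‖ :=
            mul_le_mul_of_nonneg_right (norm_apply_le A u) (norm_nonneg v)
        _ ≤ specNorm A * (specNorm Q * ‖x‖) * (specNorm δQ * ‖x‖) := by
            apply _root_.mul_le_mul _ hv (norm_nonneg v) (by positivity)
            exact mul_le_mul_of_nonneg_left hu hA0
    have c2 : |⟪f A v, u⟫_ℝ| ≤ specNorm A * (specNorm δQ * ‖x‖) * (specNorm Q * ‖x‖) := by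
      calc |⟪f A v, u⟫_ℝ| ≤ ‖f A v‖ * ‖u‖ := abs_real_inner_le_norm _ _
        _ ≤ (specNorm A * ‖v‖) * ‖u‖ :=
            mul_le_mul_of_nonneg_right (norm_apply_le A v) (norm_nonneg u)
        _ ≤ specNorm A * (specNorm δQ * ‖x‖) * (specNorm Q * ‖x‖) := by
            apply _root_.mul_le_mul _ hu (norm_nonneg u) (by positivity)
            exact mul_le_mul_of_nonneg_left hv hA0
    have c3 : |⟪f A v, v⟫_ℝ| ≤ specNorm A * (specNorm δQ * ‖x‖) * (specNorm δQ * ‖x‖) := by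
      calc |⟪f A v, v⟫_ℝ| ≤ ‖f A v‖ * ‖v‖ := abs_real_inner_le_norm _ _
        _ ≤ (specNorm A * ‖v‖) * ‖v‖ :=
            mul_le_mul_of_nonneg_right (norm_apply_le A v) (norm_nonneg v)
        _ ≤ specNorm A * (specNorm δQ * ‖x‖) * (specNorm δQ * ‖x‖) := by
            apply _root_.mul_le_mul _ hv (norm_nonneg v) (by positivity)
            exact mul_le_mul_of_nonneg_left hv hA0
    have habs := abs_add_three (⟪f A u, v⟫_ℝ) (⟪f A v, u⟫_ℝ) (⟪f A v, v⟫_ℝ)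
    rw [hε]
    nlinarith [c1, c2, c3, habs, sq_nonneg ‖x‖]
  have upper : eigValsDesc B k ≤ eigValsDesc A k + ε := by
    obtain ⟨W, hWr, hWf⟩ := exists_bot hAh k
    refine eig_le hBh k _ (W.map (e.symm : EuclideanSpace ℝ (Fin n) →ₗ[ℝ] EuclideanSpace ℝ (Fin n))) ?_ ?_
    · rw [LinearEquiv.finrank_map_eq, hWr]
    · intro x hx
      obtain ⟨y, hy, hyx⟩ := Submodule.mem_map.mp hx
      have hex : f P x ∈ W := by
        have h5 : e x = y := by
          rw [← hyx]; exact e.apply_symm_apply y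
        rw [← heapp, h5]; exact hy
      have h1 := hWf (f P x) hex
      have h2 := (abs_le.mp (hqf x)).1
      have h3 := hiso2 x
      rw [h3] at h1
      nlinarith [h1, h2]
  have lower : eigValsDesc A k - ε ≤ eigValsDesc B k := by
    obtain ⟨V, hVr, hVf⟩ := exists_top hAh k
    refine eig_ge hBh k _ (V.map (e.symm : EuclideanSpace ℝ (Fin n) →ₗ[ℝ] EuclideanSpace ℝ (Fin n))) ?_ ?_
    · rw [LinearEquiv.finrank_map_eq, hVr]
    · intro x hx
      obtain ⟨y, hy, hyx⟩ := Submodule.mem_map.mp hx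
      have hex : f P x ∈ V := by
        have h5 : e x = y := by
          rw [← hyx]; exact e.apply_symm_apply y
        rw [← heapp, h5]; exact hy
      have h1 := hVf (f P x) hex
      have h2 := (abs_le.mp (hqf x)).2
      have h3 := hiso2 x
      rw [h3] at h1
      nlinarith [h1, h2]
  rw [abs_sub_le_iff]
  constructor <;> linarith

end Aux
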